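/- Let G be a connected graph and γ = ∪_i γ_i a subgraph which is a disjoint union of subgraphs. Then the first Symanzik (Kirchhoff) polynomial satisfies ψ_G = ψ_{G/γ} · ψ_γ + R, where ψ_γ = Π_i ψ_{γ_i}, G/γ is the contraction of γ in G, and R is a polynomial whose degree in the Schwinger parameters of the edges of γ is strictly greater than the loop number h_γ = deg ψ_γ. Consequently the order of vanishing of ψ_G along the locus where all edge variables of γ vanish equals h_γ. -/

import Mathlib

open MvPolynomial

/-- A (multi)graph with vertex type `V` and labelled edge type `E`; each edge has two
(not necessarily distinct) endpoints. -/
structure FeynGraph where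
  V : Type
  E : Type
  src : E → V
  tgt : E → V

namespace FeynGraph

variable (G : FeynGraph)

/-- One step along an edge belonging to the edge set `F`. -/
def Step (F : Set G.E) (u v : G.V) : Prop :=
  ∃ e ∈ F, (G.src e = u ∧ G.tgt e = v) ∨ (G.src e = v ∧ G.tgt e = u)

/-- `u` and `v` are joined by a walk using only edges in `F`. -/
def Conn (F : Set G.E) (u v : G.V) : Prop :=
  Relation.ReflTransGen (G.Step F) u v

/-- The number of connected components of the spanning subgraph with edge set `F`
(on the full vertex set of `G`). -/
noncomputable def ncomp (F : Set G.E) : ℕ :=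
  Nat.card (Quot (G.Conn F))

/-- `G` is connected. -/
def IsConnected : Prop := ∀ u v : G.V, G.Conn Set.univ u v

/-- The loop number (first Betti number) `h = |F| + c(F) - |V|` of the spanning subgraph
with edge set `F`. -/
noncomputable def loops (F : Set G.E) : ℕ :=
  Nat.card F + G.ncomp F - Nat.card G.V

/-- A maximal spanning forest: an edge set inducing the same connectivity relation as the
whole graph, of cardinality `|V| - c(G)` (hence acyclic, one spanning tree in each
connected component; a spanning tree when `G` is connected). -/
def IsSpanningForest (T : Finset G.E) : Prop :=
  (∀ u v : G.V, G.Conn ↑T u v ↔ G.Conn Set.univ u v) ∧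
    T.card + G.ncomp Set.univ = Nat.card G.V

open Classical in
/-- The first Symanzik (Kirchhoff) polynomial `ψ_G = Σ_T Π_{e ∉ T} A_e`, the sum being
over maximal spanning forests (spanning trees, for `G` connected); for a disjoint union
this is the product of the graph polynomials of the components. -/
noncomputable def psi [Finite G.E] : MvPolynomial G.E ℝ :=
  letI := Fintype.ofFinite G.E
  ∑ T : Finset G.E, if G.IsSpanningForest T then ∏ e ∈ Tᶜ, X e else 0

/-- The subgraph of `G` with edge set `F` (on the full vertex set). -/
def restrict (F : Set G.E) : FeynGraph where
  V := G.V
  E := {e : G.E // e ∈ F}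
  src := fun e => G.src e.1
  tgt := fun e => G.tgt e.1

/-- The contraction `G/F`: every edge of `F` is contracted to a point. -/
def contract (F : Set G.E) : FeynGraph where
  V := Quot (G.Conn F)
  E := {e : G.E // e ∉ F}
  src := fun e => Quot.mk _ (G.src e.1)
  tgt := fun e => Quot.mk _ (G.tgt e.1)

/-- The graph `G•` obtained from `G` by identifying the two vertices `v₁` and `v₂`. -/
def ident (v₁ v₂ : G.V) : FeynGraph where
  V := Quot (fun a b : G.V => a = v₁ ∧ b = v₂)
  E := G.E
  src := fun e => Quot.mk _ (G.src e)
  tgt := fun e => Quot.mk _ (G.tgt e)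

/-- The graph `Ḡ` obtained from `G` by adding a new edge joining `v₁` and `v₂`
(the new edge being labelled `none`). -/
def addEdge (v₁ v₂ : G.V) : FeynGraph where
  V := G.V
  E := Option G.E
  src := fun e => e.elim v₁ G.src
  tgt := fun e => e.elim v₂ G.tgt


instance [Finite G.E] (F : Set G.E) : Finite (G.restrict F).E :=
  inferInstanceAs (Finite {e : G.E // e ∈ F})

instance [Finite G.E] (F : Set G.E) : Finite (G.contract F).E :=
  inferInstanceAs (Finite {e : G.E // e ∉ F})

instance [Finite G.V] (F : Set G.E) : Finite (G.contract F).V :=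
  inferInstanceAs (Finite (Quot (G.Conn F)))

instance [Finite G.E] (v₁ v₂ : G.V) : Finite (G.ident v₁ v₂).E :=
  inferInstanceAs (Finite G.E)

instance [Finite G.V] (v₁ v₂ : G.V) : Finite (G.ident v₁ v₂).V :=
  inferInstanceAs (Finite (Quot _))

instance [Finite G.E] (v₁ v₂ : G.V) : Finite (G.addEdge v₁ v₂).E :=
  letI := Fintype.ofFinite G.E
  inferInstanceAs (Finite (Option G.E))

instance [Finite G.V] (v₁ v₂ : G.V) : Finite (G.addEdge v₁ v₂).V :=
  inferInstanceAs (Finite G.V)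

end FeynGraph


set_option linter.unusedSectionVars false
set_option maxHeartbeats 1000000

namespace FeynGraph

noncomputable instance (priority := 2000) fintypeE (G : FeynGraph) [Finite G.E] :
    Fintype G.E := Fintype.ofFinite _

noncomputable instance (priority := 2000) fintypeContractE (G : FeynGraph) [Finite G.E]
    (S : Set G.E) : Fintype (G.contract S).E := Fintype.ofFinite _

noncomputable instance (priority := 2000) fintypeRestrictE (G : FeynGraph) [Finite G.E]
    (S : Set G.E) : Fintype (G.restrict S).E := Fintype.ofFinite _

variable {G : FeynGraph}

lemma step_symm {F : Set G.E} {u v : G.V} (h : G.Step F u v) : G.Step F v u := by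
  obtain ⟨e, he, h⟩ := h; exact ⟨e, he, h.symm⟩

lemma conn_refl (F : Set G.E) (u : G.V) : G.Conn F u u := Relation.ReflTransGen.refl

lemma conn_symm {F : Set G.E} {u v : G.V} (h : G.Conn F u v) : G.Conn F v u :=
  (@Relation.ReflTransGen.stdSymm _ (G.Step F) ⟨fun _ _ => step_symm⟩).symm _ _ h

lemma conn_trans {F : Set G.E} {u v w : G.V} (h : G.Conn F u v) (h' : G.Conn F v w) :
    G.Conn F u w := Relation.ReflTransGen.trans h h'

lemma conn_equivalence (F : Set G.E) : Equivalence (G.Conn F) :=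
  ⟨conn_refl F, conn_symm, conn_trans⟩

lemma conn_of_step {F : Set G.E} {u v : G.V} (h : G.Step F u v) : G.Conn F u v :=
  Relation.ReflTransGen.single h

lemma quot_mk_eq_iff (F : Set G.E) (u v : G.V) :
    Quot.mk (G.Conn F) u = Quot.mk (G.Conn F) v ↔ G.Conn F u v := by
  rw [Quot.eq]
  exact ⟨fun h => ((conn_equivalence F).eqvGen_iff).1 h, Relation.EqvGen.rel u v⟩

lemma conn_mono {F F' : Set G.E} (h : F ⊆ F') {u v : G.V} (hc : G.Conn F u v) :
    G.Conn F' u v :=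
  Relation.ReflTransGen.mono (fun _ _ ⟨e, he, p⟩ => ⟨e, h he, p⟩) _ _ hc

lemma conn_closure {F F' : Set G.E} (h : ∀ e ∈ F', G.Conn F (G.src e) (G.tgt e))
    {u v : G.V} (hc : G.Conn F' u v) : G.Conn F u v := by
  have : ∀ a b : G.V, G.Step F' a b → G.Conn F a b := by
    rintro a b ⟨e, he, ⟨h1, h2⟩ | ⟨h1, h2⟩⟩
    · rw [← h1, ← h2]; exact h e he
    · rw [← h1, ← h2]; exact conn_symm (h e he)
  have h2 := Relation.ReflTransGen.mono this _ _ hc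
  have h3 : Relation.ReflTransGen (Relation.ReflTransGen (G.Step F)) u v := h2
  rw [Relation.reflTransGen_idem] at h3
  exact h3


section Ncomp

variable [Finite G.V]

/-- The natural surjection between component quotients. -/
noncomputable def quotMap {F F' : Set G.E} (h : F ⊆ F') :
    Quot (G.Conn F) → Quot (G.Conn F') :=
  Quot.lift (Quot.mk _) (fun _ _ hab => Quot.sound (conn_mono h hab))

lemma quotMap_surjective {F F' : Set G.E} (h : F ⊆ F') :
    Function.Surjective (quotMap (G := G) h) := by
  intro x; induction x using Quot.ind with
  | _ v => exact ⟨Quot.mk _ v, rfl⟩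

lemma ncomp_le_of_subset {F F' : Set G.E} (h : F ⊆ F') : G.ncomp F' ≤ G.ncomp F :=
  Nat.card_le_card_of_surjective _ (quotMap_surjective h)

lemma ncomp_eq_of_conn_iff {F F' : Set G.E}
    (h : ∀ u v, G.Conn F u v ↔ G.Conn F' u v) : G.ncomp F = G.ncomp F' := by
  unfold ncomp
  have : G.Conn F = G.Conn F' := by
    funext u v; exact propext (h u v)
  rw [this]

lemma ncomp_empty : G.ncomp (∅ : Set G.E) = Nat.card G.V := by
  have h : ∀ a b : G.V, G.Conn ∅ a b → a = b := by
    intro a b hab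
    induction hab with
    | refl => rfl
    | tail _ hbc ih => obtain ⟨e, he, _⟩ := hbc; exact absurd he (Set.notMem_empty e)
  exact Nat.card_congr ⟨Quot.lift id (fun a b hab => h a b hab), Quot.mk _,
    fun x => by induction x using Quot.ind with | _ v => rfl, fun v => rfl⟩

lemma conn_insert_cases {F : Set G.E} {e : G.E} {u v : G.V}
    (h : G.Conn (insert e F) u v) :
    G.Conn F u v ∨ (G.Conn F u (G.src e) ∧ G.Conn F (G.tgt e) v) ∨
      (G.Conn F u (G.tgt e) ∧ G.Conn F (G.src e) v) := by
  induction h with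
  | refl => exact Or.inl (conn_refl _ _)
  | @tail b c hab hbc ih =>
    obtain ⟨f, hf, hends⟩ := hbc
    rcases hf with rfl | hfF
    · rcases hends with ⟨h1, h2⟩ | ⟨h1, h2⟩
      · subst h1; subst h2
        rcases ih with ih | ⟨i1, i2⟩ | ⟨i1, i2⟩
        · exact Or.inr (Or.inl ⟨ih, conn_refl _ _⟩)
        · exact Or.inr (Or.inl ⟨i1, conn_refl _ _⟩)
        · exact Or.inl i1
      · subst h1; subst h2
        rcases ih with ih | ⟨i1, i2⟩ | ⟨i1, i2⟩
        · exact Or.inr (Or.inr ⟨ih, conn_refl _ _⟩)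
        · exact Or.inl i1
        · exact Or.inr (Or.inr ⟨i1, conn_refl _ _⟩)
    · have hbc' : G.Conn F b c := conn_of_step ⟨f, hfF, hends⟩
      rcases ih with ih | ⟨i1, i2⟩ | ⟨i1, i2⟩
      · exact Or.inl (conn_trans ih hbc')
      · exact Or.inr (Or.inl ⟨i1, conn_trans i2 hbc'⟩)
      · exact Or.inr (Or.inr ⟨i1, conn_trans i2 hbc'⟩)

lemma ncomp_le_ncomp_insert_add_one (F : Set G.E) (e : G.E) :
    G.ncomp F ≤ G.ncomp (insert e F) + 1 := by
  classical
  set f := quotMap (G := G) (Set.subset_insert e F) with hf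
  set a0 : Quot (G.Conn F) := Quot.mk _ (G.src e) with ha0
  set a1 : Quot (G.Conn F) := Quot.mk _ (G.tgt e) with ha1
  have key : ∀ x y : Quot (G.Conn F), f x = f y → x = y ∨ (x ∈ ({a0, a1} : Set _) ∧ y ∈ ({a0, a1} : Set _)) := by
    intro x y
    induction x using Quot.ind with | _ a =>
    induction y using Quot.ind with | _ b =>
    intro hxy
    have : G.Conn (insert e F) a b := (quot_mk_eq_iff _ _ _).1 hxy
    rcases conn_insert_cases this with h | ⟨h1, h2⟩ | ⟨h1, h2⟩
    · exact Or.inl ((quot_mk_eq_iff _ _ _).2 h)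
    · exact Or.inr ⟨Or.inl ((quot_mk_eq_iff _ _ _).2 h1),
        Or.inr ((quot_mk_eq_iff _ _ _).2 (conn_symm h2))⟩
    · exact Or.inr ⟨Or.inr ((quot_mk_eq_iff _ _ _).2 h1),
        Or.inl ((quot_mk_eq_iff _ _ _).2 (conn_symm h2))⟩
  -- f is injective on the complement of {a1}
  have hinj : Set.InjOn f ({a1}ᶜ : Set (Quot (G.Conn F))) := by
    intro x hx y hy hxy
    rcases key x y hxy with h | ⟨hx', hy'⟩
    · exact h
    · rcases hx' with rfl | rfl
      · rcases hy' with rfl | rfl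
        · rfl
        · exact absurd rfl hy
      · exact absurd rfl hx
  have h1 : (({a1}ᶜ : Set (Quot (G.Conn F)))).ncard ≤ (Set.univ : Set (Quot (G.Conn (insert e F)))).ncard :=
    Set.ncard_le_ncard_of_injOn f (fun a _ => Set.mem_univ _) hinj (Set.finite_univ)
  have h2 : Nat.card (Quot (G.Conn F)) ≤ ({a1}ᶜ : Set (Quot (G.Conn F))).ncard + 1 := by
    rw [← Set.ncard_univ]
    have : ({a1}ᶜ : Set (Quot (G.Conn F))) = Set.univ \ {a1} := by
      simp [Set.compl_eq_univ_diff]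
    rw [this, Set.ncard_diff_singleton_add_one (Set.mem_univ a1) Set.finite_univ]
  rw [Set.ncard_univ] at h1
  exact h2.trans (Nat.add_le_add_right h1 1)

lemma ncomp_insert_lt {F : Set G.E} {e : G.E}
    (h : ¬ G.Conn F (G.src e) (G.tgt e)) : G.ncomp (insert e F) < G.ncomp F := by
  rcases lt_or_ge (G.ncomp (insert e F)) (G.ncomp F) with h' | h'
  · exact h'
  exfalso
  have hle := ncomp_le_of_subset (G := G) (Set.subset_insert e F)
  have hcard : G.ncomp F = G.ncomp (insert e F) := le_antisymm h' hle
  have hbij := (Nat.bijective_iff_surjective_and_card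
      (quotMap (G := G) (Set.subset_insert e F))).2
      ⟨quotMap_surjective _, hcard⟩
  have heq : Quot.mk (G.Conn F) (G.src e) = Quot.mk (G.Conn F) (G.tgt e) := by
    apply hbij.injective
    show Quot.mk _ (G.src e) = Quot.mk _ (G.tgt e)
    exact (quot_mk_eq_iff _ _ _).2 (conn_of_step ⟨e, Set.mem_insert e F, Or.inl ⟨rfl, rfl⟩⟩)
  exact h ((quot_mk_eq_iff _ _ _).1 heq)

end Ncomp


section Rank

variable [Finite G.V]

lemma card_add_ncomp_ge (F : Finset G.E) : Nat.card G.V ≤ F.card + G.ncomp ↑F := by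
  classical
  induction F using Finset.induction_on with
  | empty => simp [ncomp_empty]
  | @insert e F he ih =>
    have h1 : G.ncomp ↑F ≤ G.ncomp (insert e ↑F) + 1 := ncomp_le_ncomp_insert_add_one _ _
    rw [Finset.card_insert_of_notMem he, Finset.coe_insert]
    omega

open scoped Classical in
lemma ncomp_add_card_mono : ∀ (n : ℕ) (F F' : Finset G.E), (F' \ F).card ≤ n → F ⊆ F' →
    G.ncomp ↑F + F.card ≤ G.ncomp ↑F' + F'.card := by
  classical
  intro n
  induction n with
  | zero =>
    intro F F' hc hsub
    have : F' \ F = ∅ := Finset.card_eq_zero.1 (Nat.le_zero.1 hc)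
    have : F = F' := Finset.Subset.antisymm hsub (fun x hx => by
      by_contra hxF
      exact absurd (Finset.mem_sdiff.2 ⟨hx, hxF⟩) (by simp [this]))
    rw [this]
  | succ n ih =>
    intro F F' hc hsub
    by_cases hFF : F' \ F = ∅
    · have : F = F' := Finset.Subset.antisymm hsub (fun x hx => by
        by_contra hxF
        exact absurd (Finset.mem_sdiff.2 ⟨hx, hxF⟩) (by simp [hFF]))
      rw [this]
    · obtain ⟨e, he⟩ := Finset.nonempty_iff_ne_empty.2 hFF
      obtain ⟨heF', heF⟩ := Finset.mem_sdiff.1 he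
      have hsub2 : insert e F ⊆ F' := Finset.insert_subset heF' hsub
      have hc2 : (F' \ insert e F).card ≤ n := by
        have : F' \ insert e F = (F' \ F).erase e := by
          ext x; simp [Finset.mem_sdiff, Finset.mem_erase, Finset.mem_insert]
          tauto
        rw [this]
        have := Finset.card_erase_of_mem he
        omega
      have ih2 := ih (insert e F) F' hc2 hsub2
      have h1 : G.ncomp ↑F ≤ G.ncomp (↑(insert e F) : Set G.E) + 1 := by
        rw [Finset.coe_insert]
        exact ncomp_le_ncomp_insert_add_one _ _
      have hcard : (insert e F).card = F.card + 1 := Finset.card_insert_of_notMem heF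
      omega

lemma exists_forest_extension : ∀ (n : ℕ) (F F' : Finset G.E), G.ncomp ↑F ≤ n → F ⊆ F' →
    F.card + G.ncomp ↑F = Nat.card G.V →
    ∃ T : Finset G.E, F ⊆ T ∧ T ⊆ F' ∧ (∀ u v, G.Conn ↑T u v ↔ G.Conn ↑F' u v) ∧
      T.card + G.ncomp ↑F' = Nat.card G.V := by
  classical
  intro n
  induction n with
  | zero =>
    intro F F' hn hsub hcard
    by_cases h : ∀ e ∈ F', G.Conn ↑F (G.src e) (G.tgt e)
    · refine ⟨F, Finset.Subset.refl F, hsub, fun u v => ?_, ?_⟩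
      · constructor
        · exact conn_mono (Finset.coe_subset.2 hsub)
        · exact conn_closure (fun e he => h e (Finset.mem_coe.1 he))
      · have := ncomp_eq_of_conn_iff (G := G) (F := (↑F : Set G.E)) (F' := (↑F' : Set G.E))
          (fun u v => ⟨conn_mono (Finset.coe_subset.2 hsub),
            conn_closure (fun e he => h e (Finset.mem_coe.1 he))⟩)
        rw [← this]; exact hcard
    · push_neg at h
      obtain ⟨e, heF', hconn⟩ := h
      have := ncomp_insert_lt (G := G) (F := (↑F : Set G.E)) hconn
      omega
  | succ n ih =>
    intro F F' hn hsub hcard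
    by_cases h : ∀ e ∈ F', G.Conn ↑F (G.src e) (G.tgt e)
    · refine ⟨F, Finset.Subset.refl F, hsub, fun u v => ?_, ?_⟩
      · constructor
        · exact conn_mono (Finset.coe_subset.2 hsub)
        · exact conn_closure (fun e he => h e (Finset.mem_coe.1 he))
      · have := ncomp_eq_of_conn_iff (G := G) (F := (↑F : Set G.E)) (F' := (↑F' : Set G.E))
          (fun u v => ⟨conn_mono (Finset.coe_subset.2 hsub),
            conn_closure (fun e he => h e (Finset.mem_coe.1 he))⟩)
        rw [← this]; exact hcard
    · push_neg at h
      obtain ⟨e, heF', hconn⟩ := h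
      have hlt := ncomp_insert_lt (G := G) (F := (↑F : Set G.E)) hconn
      have hle := ncomp_le_ncomp_insert_add_one (G := G) (↑F : Set G.E) e
      have heF : e ∉ F := by
        intro heF
        exact hconn (conn_of_step ⟨e, Finset.mem_coe.2 heF, Or.inl ⟨rfl, rfl⟩⟩)
      have hco : (↑(insert e F) : Set G.E) = insert e ↑F := Finset.coe_insert e F
      obtain ⟨T, hT1, hT2, hT3, hT4⟩ := ih (insert e F) F'
        (by rw [hco]; omega)
        (Finset.insert_subset heF' hsub)
        (by rw [hco, Finset.card_insert_of_notMem heF]; omega)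
      exact ⟨T, (Finset.subset_insert e F).trans hT1, hT2, hT3, hT4⟩

end Rank


section Transfer

lemma restrict_step_eq (S : Set G.E) (F : Set (G.restrict S).E) :
    (G.restrict S).Step F = G.Step (Subtype.val '' F) := by
  funext u v
  apply propext
  constructor
  · rintro ⟨e, he, h⟩
    exact ⟨e.1, ⟨e, he, rfl⟩, h⟩
  · rintro ⟨_, ⟨e, he, rfl⟩, h⟩
    exact ⟨e, he, h⟩

lemma restrict_conn_eq (S : Set G.E) (F : Set (G.restrict S).E) :
    (G.restrict S).Conn F = G.Conn (Subtype.val '' F) := by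
  unfold Conn
  rw [restrict_step_eq]
  rfl

lemma restrict_ncomp (S : Set G.E) (F : Set (G.restrict S).E) :
    (G.restrict S).ncomp F = G.ncomp (Subtype.val '' F) := by
  unfold ncomp
  rw [restrict_conn_eq]; rfl

lemma contract_conn_iff (S : Set G.E) (F : Set (G.contract S).E) (u v : G.V) :
    (G.contract S).Conn F (Quot.mk _ u) (Quot.mk _ v) ↔
      G.Conn (S ∪ Subtype.val '' F) u v := by
  constructor
  · have key : ∀ x y, (G.contract S).Conn F x y → ∀ u v : G.V,
        x = Quot.mk (G.Conn S) u → y = Quot.mk (G.Conn S) v →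
        G.Conn (S ∪ Subtype.val '' F) u v := by
      intro x y hxy
      induction hxy with
      | refl =>
        intro u v hu hv
        have : G.Conn S u v := (quot_mk_eq_iff _ _ _).1 (hu ▸ hv ▸ rfl : Quot.mk _ u = Quot.mk _ v)
        exact conn_mono Set.subset_union_left this
      | @tail b c hab hbc ih =>
        intro u v hu hv
        obtain ⟨e, he, hends⟩ := hbc
        have hstep : G.Conn (S ∪ Subtype.val '' F) (G.src e.1) (G.tgt e.1) :=
          conn_of_step ⟨e.1, Or.inr ⟨e, he, rfl⟩, Or.inl ⟨rfl, rfl⟩⟩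
        rcases hends with ⟨h1, h2⟩ | ⟨h1, h2⟩
        · -- contract.src e = b, contract.tgt e = c = mk v
          have hb := ih u (G.src e.1) hu h1.symm
          have hv' : G.Conn S (G.tgt e.1) v := (quot_mk_eq_iff _ _ _).1 (h2.trans hv)
          exact conn_trans (conn_trans hb hstep) (conn_mono Set.subset_union_left hv')
        · have hb := ih u (G.tgt e.1) hu h2.symm
          have hv' : G.Conn S (G.src e.1) v := (quot_mk_eq_iff _ _ _).1 (h1.trans hv)
          exact conn_trans (conn_trans hb (conn_symm hstep))
            (conn_mono Set.subset_union_left hv')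
    exact fun h => key _ _ h u v rfl rfl
  · intro h
    induction h with
    | refl => exact conn_refl _ _
    | @tail b c hab hbc ih =>
      obtain ⟨e, he, hends⟩ := hbc
      rcases he with heS | ⟨e', he', rfl⟩
      · have : Quot.mk (G.Conn S) b = Quot.mk (G.Conn S) c := by
          apply (quot_mk_eq_iff _ _ _).2
          rcases hends with ⟨h1, h2⟩ | ⟨h1, h2⟩
          · exact h1 ▸ h2 ▸ conn_of_step ⟨e, heS, Or.inl ⟨rfl, rfl⟩⟩
          · exact h1 ▸ h2 ▸ conn_symm (conn_of_step ⟨e, heS, Or.inl ⟨rfl, rfl⟩⟩)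
        exact this ▸ ih
      · refine Relation.ReflTransGen.tail ih ⟨e', he', ?_⟩
        rcases hends with ⟨h1, h2⟩ | ⟨h1, h2⟩
        · exact Or.inl ⟨congrArg _ h1, congrArg _ h2⟩
        · exact Or.inr ⟨congrArg _ h1, congrArg _ h2⟩

lemma contract_ncomp (S : Set G.E) (F : Set (G.contract S).E) :
    (G.contract S).ncomp F = G.ncomp (S ∪ Subtype.val '' F) := by
  apply Nat.card_congr
  refine ⟨Quot.lift (Quot.lift (Quot.mk (G.Conn (S ∪ Subtype.val '' F)))
      (fun a b hab => Quot.sound (conn_mono Set.subset_union_left hab))) ?_,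
    Quot.lift (fun v => Quot.mk _ (Quot.mk _ v))
      (fun a b hab => Quot.sound ((contract_conn_iff S F a b).2 hab)), ?_, ?_⟩
  · intro x y hxy
    induction x using Quot.ind with | _ a =>
    induction y using Quot.ind with | _ b =>
    exact Quot.sound ((contract_conn_iff S F a b).1 hxy)
  · intro x
    induction x using Quot.ind with | _ a =>
    induction a using Quot.ind with | _ v =>
    rfl
  · intro x
    induction x using Quot.ind with | _ v =>
    rfl

lemma contract_card_V (S : Set G.E) : Nat.card (G.contract S).V = G.ncomp S := rfl

end Transfer

section Forests

variable [Finite G.V]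

lemma conn_iff_of_ncomp_eq {F F' : Set G.E} (hsub : F ⊆ F')
    (h : G.ncomp F = G.ncomp F') (u v : G.V) : G.Conn F u v ↔ G.Conn F' u v := by
  refine ⟨fun hc => conn_mono hsub hc, fun hc => ?_⟩
  have hbij := (Nat.bijective_iff_surjective_and_card (quotMap (G := G) hsub)).2
    ⟨quotMap_surjective _, h⟩
  have h2 : quotMap (G := G) hsub (Quot.mk _ u) = quotMap (G := G) hsub (Quot.mk _ v) :=
    (quot_mk_eq_iff F' u v).2 hc
  exact (quot_mk_eq_iff F u v).1 (hbij.injective h2)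

open scoped Classical in
lemma restrict_forest_iff (γ : Finset G.E) (T₂ : Finset (G.restrict ↑γ).E) :
    (G.restrict ↑γ).IsSpanningForest T₂ ↔
      ((∀ u v, G.Conn ↑(T₂.image Subtype.val) u v ↔ G.Conn ↑γ u v) ∧
        (T₂.image Subtype.val).card + G.ncomp ↑γ = Nat.card G.V) := by
  have h1 : Subtype.val '' (Set.univ : Set (G.restrict ↑γ).E) = (↑γ : Set G.E) :=
    Subtype.coe_image_univ _
  have h2 : Subtype.val '' (↑T₂ : Set (G.restrict ↑γ).E) =
      (↑(T₂.image Subtype.val) : Set G.E) := (Finset.coe_image).symm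
  have h3 : T₂.card = (T₂.image Subtype.val).card :=
    (Finset.card_image_of_injective _ Subtype.val_injective).symm
  unfold IsSpanningForest
  rw [restrict_conn_eq, restrict_conn_eq, h1, h2, restrict_ncomp, h1, ← h3]
  exact Iff.rfl

lemma contract_val_image_univ (γ : Finset G.E) :
    Subtype.val '' (Set.univ : Set (G.contract ↑γ).E) = {e : G.E | e ∉ (↑γ : Set G.E)} := by
  ext e
  constructor
  · rintro ⟨⟨e', he'⟩, _, rfl⟩; exact he'
  · intro he; exact ⟨⟨e, he⟩, Set.mem_univ _, rfl⟩

open scoped Classical in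
lemma contract_forest_iff (γ : Finset G.E) (T₁ : Finset (G.contract ↑γ).E) :
    (G.contract ↑γ).IsSpanningForest T₁ ↔
      ((∀ u v, G.Conn (↑γ ∪ ↑(T₁.image Subtype.val)) u v ↔ G.Conn Set.univ u v) ∧
        (T₁.image Subtype.val).card + G.ncomp Set.univ = G.ncomp ↑γ) := by
  have huniv : (↑γ : Set G.E) ∪ Subtype.val '' (Set.univ : Set (G.contract ↑γ).E) =
      Set.univ := by
    rw [contract_val_image_univ]
    ext e
    simp only [Set.mem_union, Set.mem_setOf_eq, Set.mem_univ, iff_true]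
    exact or_not
  have h2 : Subtype.val '' (↑T₁ : Set (G.contract ↑γ).E) =
      (↑(T₁.image Subtype.val) : Set G.E) := (Finset.coe_image).symm
  have h3 : T₁.card = (T₁.image Subtype.val).card :=
    (Finset.card_image_of_injective _ Subtype.val_injective).symm
  have hnu : (G.contract ↑γ).ncomp Set.univ = G.ncomp Set.univ := by
    rw [contract_ncomp, huniv]
  have hnT : ∀ u v : G.V,
      ((G.contract ↑γ).Conn ↑T₁ (Quot.mk _ u) (Quot.mk _ v) ↔
        G.Conn (↑γ ∪ ↑(T₁.image Subtype.val)) u v) := by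
    intro u v; rw [contract_conn_iff, h2]
  have hnU : ∀ u v : G.V,
      ((G.contract ↑γ).Conn Set.univ (Quot.mk _ u) (Quot.mk _ v) ↔
        G.Conn Set.univ u v) := by
    intro u v; rw [contract_conn_iff, huniv]
  unfold IsSpanningForest
  constructor
  · rintro ⟨hc, hcard⟩
    refine ⟨fun u v => ((hnT u v).symm.trans (hc _ _)).trans (hnU u v), ?_⟩
    rw [← h3, ← hnu, hcard]; rfl
  · rintro ⟨hc, hcard⟩
    constructor
    · intro x y
      induction x using Quot.ind with | _ u =>
      induction y using Quot.ind with | _ v =>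
      exact ((hnT u v).trans (hc u v)).trans (hnU u v).symm
    · rw [hnu, h3, hcard]; rfl

open scoped Classical in
lemma inter_card_le {γ T : Finset G.E} (hT : G.IsSpanningForest T) :
    (T ∩ γ).card + G.ncomp ↑γ ≤ Nat.card G.V := by
  have hmono : G.ncomp ↑(T ∩ γ) + (T ∩ γ).card ≤ G.ncomp ↑T + T.card :=
    ncomp_add_card_mono (T \ (T ∩ γ)).card _ _ le_rfl Finset.inter_subset_left
  have hTn : G.ncomp ↑T = G.ncomp Set.univ := ncomp_eq_of_conn_iff hT.1
  have hsub : G.ncomp ↑γ ≤ G.ncomp ↑(T ∩ γ) :=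
    ncomp_le_of_subset (Finset.coe_subset.2 Finset.inter_subset_right)
  have := hT.2
  omega

open scoped Classical in
lemma good_tree_split {γ T : Finset G.E} (hT : G.IsSpanningForest T)
    (hgood : (T ∩ γ).card + G.ncomp ↑γ = Nat.card G.V) :
    (∀ u v, G.Conn ↑(T ∩ γ) u v ↔ G.Conn ↑γ u v) ∧
    (∀ u v, G.Conn (↑γ ∪ ↑(T \ γ)) u v ↔ G.Conn Set.univ u v) ∧
    (T \ γ).card + G.ncomp Set.univ = G.ncomp ↑γ := by
  have h5 : Nat.card G.V ≤ (T ∩ γ).card + G.ncomp ↑(T ∩ γ) := card_add_ncomp_ge _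
  have hmono : G.ncomp ↑(T ∩ γ) + (T ∩ γ).card ≤ G.ncomp ↑T + T.card :=
    ncomp_add_card_mono (T \ (T ∩ γ)).card _ _ le_rfl Finset.inter_subset_left
  have hTn : G.ncomp ↑T = G.ncomp Set.univ := ncomp_eq_of_conn_iff hT.1
  have hsub : G.ncomp ↑γ ≤ G.ncomp ↑(T ∩ γ) :=
    ncomp_le_of_subset (Finset.coe_subset.2 Finset.inter_subset_right)
  have hTcard := hT.2
  have heq : G.ncomp ↑(T ∩ γ) = G.ncomp ↑γ := by omega
  refine ⟨conn_iff_of_ncomp_eq (Finset.coe_subset.2 Finset.inter_subset_right) heq, ?_, ?_⟩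
  · intro u v
    constructor
    · exact fun hc => conn_mono (Set.subset_univ _) hc
    · intro hc
      have hc' : G.Conn ↑T u v := (hT.1 u v).2 hc
      refine conn_mono ?_ hc'
      intro e he
      rw [Finset.mem_coe] at he
      by_cases heγ : e ∈ γ
      · exact Or.inl (Finset.mem_coe.2 heγ)
      · exact Or.inr (Finset.mem_coe.2 (Finset.mem_sdiff.2 ⟨he, heγ⟩))
  · have hic : (T ∩ γ).card + (T \ γ).card = T.card := by
      rw [add_comm]; exact Finset.card_sdiff_add_card_inter T γ
    omega

open scoped Classical in
lemma union_tree {γ S₁ S₂ : Finset G.E} (hS1 : ∀ e ∈ S₁, e ∉ γ) (hS2 : S₂ ⊆ γ)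
    (c1 : ∀ u v, G.Conn ↑S₂ u v ↔ G.Conn ↑γ u v)
    (c2 : S₂.card + G.ncomp ↑γ = Nat.card G.V)
    (c3 : ∀ u v, G.Conn (↑γ ∪ ↑S₁) u v ↔ G.Conn Set.univ u v)
    (c4 : S₁.card + G.ncomp Set.univ = G.ncomp ↑γ) :
    G.IsSpanningForest (S₁ ∪ S₂) ∧ (S₁ ∪ S₂) ∩ γ = S₂ ∧ (S₁ ∪ S₂) \ γ = S₁ := by
  have hdisj : Disjoint S₁ S₂ := by
    rw [Finset.disjoint_left]
    exact fun e he1 he2 => hS1 e he1 (hS2 he2)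
  have hint : (S₁ ∪ S₂) ∩ γ = S₂ := by
    ext e
    simp only [Finset.mem_inter, Finset.mem_union]
    constructor
    · rintro ⟨h1 | h1, h2⟩
      · exact absurd h2 (hS1 e h1)
      · exact h1
    · exact fun h => ⟨Or.inr h, hS2 h⟩
  have hsd : (S₁ ∪ S₂) \ γ = S₁ := by
    ext e
    simp only [Finset.mem_sdiff, Finset.mem_union]
    constructor
    · rintro ⟨h1 | h1, h2⟩
      · exact h1
      · exact absurd (hS2 h1) h2
    · exact fun h => ⟨Or.inl h, hS1 e h⟩
  refine ⟨⟨fun u v => ?_, ?_⟩, hint, hsd⟩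
  · constructor
    · exact fun hc => conn_mono (Set.subset_univ _) hc
    · intro hc
      have hc' : G.Conn (↑γ ∪ ↑S₁) u v := (c3 u v).2 hc
      refine conn_closure ?_ hc'
      rintro e (he | he)
      · have : G.Conn ↑S₂ (G.src e) (G.tgt e) :=
          (c1 _ _).2 (conn_of_step ⟨e, he, Or.inl ⟨rfl, rfl⟩⟩)
        refine conn_mono ?_ this
        intro x hx
        exact Finset.mem_coe.2 (Finset.mem_union_right _ (Finset.mem_coe.1 hx))
      · exact conn_of_step ⟨e, Finset.mem_coe.2 (Finset.mem_union_left _ (Finset.mem_coe.1 he)),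
          Or.inl ⟨rfl, rfl⟩⟩
  · rw [Finset.card_union_of_disjoint hdisj]
    omega

open scoped Classical in
lemma exists_good_tree [Finite G.E] (γ : Finset G.E) :
    ∃ T : Finset G.E, G.IsSpanningForest T ∧
      (T ∩ γ).card + G.ncomp ↑γ = Nat.card G.V := by
  letI := Fintype.ofFinite G.E
  obtain ⟨S₂, h1, h2, h3, h4⟩ := exists_forest_extension (G := G)
    (G.ncomp ↑(∅ : Finset G.E)) ∅ γ le_rfl (Finset.empty_subset γ)
    (by simp [ncomp_empty])
  have hS2n : G.ncomp ↑S₂ = G.ncomp ↑γ := ncomp_eq_of_conn_iff h3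
  obtain ⟨T, k1, k2, k3, k4⟩ := exists_forest_extension (G := G)
    (G.ncomp ↑S₂) S₂ Finset.univ le_rfl (Finset.subset_univ _)
    (by rw [hS2n]; exact h4)
  have hcu : (↑(Finset.univ : Finset G.E) : Set G.E) = Set.univ := Finset.coe_univ
  refine ⟨T, ⟨fun u v => hcu ▸ k3 u v, by rw [← hcu]; exact k4⟩, ?_⟩
  have hsub : S₂ ⊆ T ∩ γ := Finset.subset_inter k1 h2
  have hle := Finset.card_le_card hsub
  have hub : (T ∩ γ).card + G.ncomp ↑γ ≤ Nat.card G.V :=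
    inter_card_le ⟨fun u v => hcu ▸ k3 u v, by rw [← hcu]; exact k4⟩
  omega

end Forests

section Poly

open MvPolynomial

lemma prod_X_eq_monomial {σ : Type} [DecidableEq σ] (s : Finset σ) :
    (∏ e ∈ s, (X e : MvPolynomial σ ℝ)) =
      monomial (∑ e ∈ s, Finsupp.single e 1) 1 := by
  induction s using Finset.induction_on with
  | empty => simp
  | @insert a s ha ih =>
    have hX : (X a : MvPolynomial σ ℝ) = monomial (Finsupp.single a 1) 1 := by
      rw [← X_pow_eq_monomial, pow_one]
    rw [Finset.prod_insert ha, Finset.sum_insert ha, ih, hX, monomial_mul, one_mul]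

lemma indicator_sum_apply {σ : Type} [DecidableEq σ] (s : Finset σ) (e : σ) :
    (∑ x ∈ s, Finsupp.single x 1 : σ →₀ ℕ) e = if e ∈ s then 1 else 0 := by
  rw [Finset.sum_apply']
  simp [Finsupp.single_apply]

lemma indicator_sum_injective {σ : Type} [DecidableEq σ] {s t : Finset σ}
    (h : (∑ x ∈ s, Finsupp.single x 1 : σ →₀ ℕ) = ∑ x ∈ t, Finsupp.single x 1) :
    s = t := by
  ext e
  have he := DFunLike.congr_fun h e
  rw [indicator_sum_apply, indicator_sum_apply] at he
  by_cases h1 : e ∈ s <;> by_cases h2 : e ∈ t <;> simp [h1, h2] at he ⊢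

lemma sum_indicator_over {σ : Type} [DecidableEq σ] (γ s : Finset σ) :
    ∑ e ∈ γ, (∑ x ∈ s, Finsupp.single x 1 : σ →₀ ℕ) e = (γ ∩ s).card := by
  simp only [indicator_sum_apply]
  rw [Finset.sum_boole, Finset.filter_mem_eq_inter, Nat.cast_id]

end Poly

section GoodSum

open MvPolynomial

lemma mem_image_val {α : Type} {q : α → Prop} [DecidableEq α] (s : Finset {x // q x})
    (x : {x // q x}) : x.1 ∈ s.image Subtype.val ↔ x ∈ s := by
  rw [Finset.mem_image]
  constructor
  · rintro ⟨y, hy, hxy⟩; rwa [Subtype.val_injective hxy] at hy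
  · exact fun h => ⟨x, h, rfl⟩

open scoped Classical in
lemma mem_image_compl_contract [Finite G.E] (γ : Finset G.E)
    (T₁ : Finset (G.contract (↑γ : Set G.E)).E) (e : G.E) :
    e ∈ (T₁ᶜ).image Subtype.val ↔ e ∉ γ ∧ e ∉ T₁.image Subtype.val := by
  constructor
  · intro h
    replace h := (Finset.mem_image (f := (Subtype.val : (G.contract (↑γ : Set G.E)).E → G.E))).1 h
    obtain ⟨x, hx, rfl⟩ := h
    replace hx := (Finset.mem_compl (α := (G.contract (↑γ : Set G.E)).E)).1 hx
    refine ⟨fun h => x.2 (Finset.mem_coe.2 h), fun h => hx ?_⟩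
    exact (mem_image_val _ _).1 h
  · rintro ⟨h1, h2⟩
    refine (Finset.mem_image (f := (Subtype.val : (G.contract (↑γ : Set G.E)).E → G.E))).2 ?_
    refine ⟨⟨e, fun h => h1 (Finset.mem_coe.1 h)⟩, ?_, rfl⟩
    refine (Finset.mem_compl (α := (G.contract (↑γ : Set G.E)).E)).2 ?_
    intro h
    apply h2
    refine Finset.mem_image.2 ?_
    exact ⟨_, h, rfl⟩

open scoped Classical in
lemma mem_image_compl_restrict [Finite G.E] (γ : Finset G.E)
    (T₂ : Finset (G.restrict (↑γ : Set G.E)).E) (e : G.E) :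
    e ∈ (T₂ᶜ).image Subtype.val ↔ e ∈ γ ∧ e ∉ T₂.image Subtype.val := by
  constructor
  · intro h
    replace h := (Finset.mem_image (f := (Subtype.val : (G.restrict (↑γ : Set G.E)).E → G.E))).1 h
    obtain ⟨x, hx, rfl⟩ := h
    replace hx := (Finset.mem_compl (α := (G.restrict (↑γ : Set G.E)).E)).1 hx
    refine ⟨Finset.mem_coe.1 x.2, fun h => hx ?_⟩
    exact (mem_image_val _ _).1 h
  · rintro ⟨h1, h2⟩
    refine (Finset.mem_image (f := (Subtype.val : (G.restrict (↑γ : Set G.E)).E → G.E))).2 ?_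
    refine ⟨⟨e, Finset.mem_coe.2 h1⟩, ?_, rfl⟩
    refine (Finset.mem_compl (α := (G.restrict (↑γ : Set G.E)).E)).2 ?_
    intro h
    apply h2
    refine Finset.mem_image.2 ?_
    exact ⟨_, h, rfl⟩

open scoped Classical in
lemma image_val_contract_not_mem [Finite G.E] (γ : Finset G.E)
    (T₁ : Finset (G.contract (↑γ : Set G.E)).E) {e : G.E}
    (h : e ∈ T₁.image Subtype.val) : e ∉ γ := by
  replace h := Finset.mem_image.1 h
  obtain ⟨x, _, rfl⟩ := h
  exact fun hh => x.2 (Finset.mem_coe.2 hh)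

open scoped Classical in
lemma image_val_restrict_mem [Finite G.E] (γ : Finset G.E)
    (T₂ : Finset (G.restrict (↑γ : Set G.E)).E) {e : G.E}
    (h : e ∈ T₂.image Subtype.val) : e ∈ γ := by
  replace h := Finset.mem_image.1 h
  obtain ⟨x, _, rfl⟩ := h
  exact Finset.mem_coe.1 x.2

open scoped Classical in
lemma union_compl_image [Finite G.E] (γ : Finset G.E)
    (T₁ : Finset (G.contract (↑γ : Set G.E)).E) (T₂ : Finset (G.restrict (↑γ : Set G.E)).E) :
    (T₁ᶜ).image Subtype.val ∪ (T₂ᶜ).image Subtype.val =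
      (T₁.image Subtype.val ∪ T₂.image Subtype.val)ᶜ := by
  ext e
  rw [Finset.mem_union, Finset.mem_compl, Finset.mem_union,
    mem_image_compl_contract, mem_image_compl_restrict]
  by_cases he : e ∈ γ
  · constructor
    · rintro (⟨h1, _⟩ | ⟨_, h2⟩)
      · exact absurd he h1
      · rintro (h | h)
        · exact (image_val_contract_not_mem γ T₁ h) he
        · exact h2 h
    · intro h
      exact Or.inr ⟨he, fun hh => h (Or.inr hh)⟩
  · constructor
    · rintro (⟨_, h2⟩ | ⟨h1, _⟩)
      · rintro (h | h)
        · exact h2 h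
        · exact he (image_val_restrict_mem γ T₂ h)
      · exact absurd h1 he
    · intro h
      exact Or.inl ⟨he, fun hh => h (Or.inl hh)⟩

open scoped Classical in
lemma disjoint_compl_image [Finite G.E] (γ : Finset G.E)
    (T₁ : Finset (G.contract (↑γ : Set G.E)).E) (T₂ : Finset (G.restrict (↑γ : Set G.E)).E) :
    Disjoint ((T₁ᶜ).image Subtype.val) ((T₂ᶜ).image Subtype.val) := by
  rw [Finset.disjoint_left]
  intro e he1 he2
  exact ((mem_image_compl_contract γ T₁ e).1 he1).1 ((mem_image_compl_restrict γ T₂ e).1 he2).1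

open scoped Classical in
lemma image_filter_contract [Finite G.E] (γ : Finset G.E) (T : Finset G.E) :
    (Finset.univ.filter (fun e : (G.contract (↑γ : Set G.E)).E => e.1 ∈ T)).image Subtype.val
      = T \ γ := by
  ext e
  refine (Finset.mem_image (f := (Subtype.val : (G.contract (↑γ : Set G.E)).E → G.E))).trans ?_; rw [Finset.mem_sdiff]
  constructor
  · rintro ⟨x, hx, rfl⟩
    replace hx := Finset.mem_filter.1 hx
    exact ⟨hx.2, fun h => x.2 (Finset.mem_coe.2 h)⟩
  · rintro ⟨h1, h2⟩
    refine ⟨⟨e, fun h => h2 (Finset.mem_coe.1 h)⟩, ?_, rfl⟩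
    refine (Finset.mem_filter (α := (G.contract (↑γ : Set G.E)).E)).2 ⟨Finset.mem_univ _, ?_⟩
    exact h1

open scoped Classical in
lemma image_filter_restrict [Finite G.E] (γ : Finset G.E) (T : Finset G.E) :
    (Finset.univ.filter (fun e : (G.restrict (↑γ : Set G.E)).E => e.1 ∈ T)).image Subtype.val
      = T ∩ γ := by
  ext e
  refine (Finset.mem_image (f := (Subtype.val : (G.restrict (↑γ : Set G.E)).E → G.E))).trans ?_; rw [Finset.mem_inter]
  constructor
  · rintro ⟨x, hx, rfl⟩
    replace hx := Finset.mem_filter.1 hx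
    exact ⟨hx.2, Finset.mem_coe.1 x.2⟩
  · rintro ⟨h1, h2⟩
    refine ⟨⟨e, Finset.mem_coe.2 h2⟩, ?_, rfl⟩
    refine (Finset.mem_filter (α := (G.restrict (↑γ : Set G.E)).E)).2 ⟨Finset.mem_univ _, ?_⟩
    exact h1

open scoped Classical in
lemma good_sum_eq [Finite G.V] [Finite G.E] (γ : Finset G.E) :
    (rename Subtype.val ((G.contract (↑γ : Set G.E)).psi)) *
      (rename Subtype.val ((G.restrict (↑γ : Set G.E)).psi)) =
    ∑ T : Finset G.E,
      if G.IsSpanningForest T ∧ (T ∩ γ).card + G.ncomp ↑γ = Nat.card G.V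
      then (monomial (∑ e ∈ Tᶜ, Finsupp.single e 1) 1 : MvPolynomial G.E ℝ) else 0 := by
  have hc : rename Subtype.val ((G.contract (↑γ : Set G.E)).psi) =
      ∑ T₁ : Finset (G.contract (↑γ : Set G.E)).E,
        if (G.contract (↑γ : Set G.E)).IsSpanningForest T₁
        then (monomial (∑ e ∈ (T₁ᶜ).image Subtype.val, Finsupp.single e 1) 1 :
          MvPolynomial G.E ℝ) else 0 := by
    have hI : Fintype.ofFinite (G.contract (↑γ : Set G.E)).E =
        fintypeContractE G (↑γ : Set G.E) := Subsingleton.elim _ _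
    rw [psi, hI]; refine (map_sum _ _ _).trans ?_
    refine Finset.sum_congr rfl fun T₁ _ => ?_
    erw [apply_ite (rename (R := ℝ) (Subtype.val : (G.contract (↑γ : Set G.E)).E → G.E)), map_zero, map_prod]
    erw [Finset.prod_congr rfl (fun x (_ : x ∈ T₁ᶜ) => rename_X (R := ℝ) Subtype.val x)]
    have himg : (∏ x ∈ T₁ᶜ, (X x.1 : MvPolynomial G.E ℝ)) =
        ∏ e ∈ (T₁ᶜ).image Subtype.val, X e :=
      (Finset.prod_image (fun x _ y _ h => Subtype.val_injective h)).symm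
    rw [himg, prod_X_eq_monomial]
  have hr : rename Subtype.val ((G.restrict (↑γ : Set G.E)).psi) =
      ∑ T₂ : Finset (G.restrict (↑γ : Set G.E)).E,
        if (G.restrict (↑γ : Set G.E)).IsSpanningForest T₂
        then (monomial (∑ e ∈ (T₂ᶜ).image Subtype.val, Finsupp.single e 1) 1 :
          MvPolynomial G.E ℝ) else 0 := by
    have hI : Fintype.ofFinite (G.restrict (↑γ : Set G.E)).E =
        fintypeRestrictE G (↑γ : Set G.E) := Subsingleton.elim _ _
    rw [psi, hI]; refine (map_sum _ _ _).trans ?_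
    refine Finset.sum_congr rfl fun T₂ _ => ?_
    erw [apply_ite (rename (R := ℝ) (Subtype.val : (G.restrict (↑γ : Set G.E)).E → G.E)), map_zero, map_prod]
    erw [Finset.prod_congr rfl (fun x (_ : x ∈ T₂ᶜ) => rename_X (R := ℝ) Subtype.val x)]
    have himg : (∏ x ∈ T₂ᶜ, (X x.1 : MvPolynomial G.E ℝ)) =
        ∏ e ∈ (T₂ᶜ).image Subtype.val, X e :=
      (Finset.prod_image (fun x _ y _ h => Subtype.val_injective h)).symm
    rw [himg, prod_X_eq_monomial]
  rw [hc, hr, Finset.sum_mul_sum]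
  have hterm : ∀ (T₁ : Finset (G.contract (↑γ : Set G.E)).E)
      (T₂ : Finset (G.restrict (↑γ : Set G.E)).E),
      ((if (G.contract (↑γ : Set G.E)).IsSpanningForest T₁
        then (monomial (∑ e ∈ (T₁ᶜ).image Subtype.val, Finsupp.single e 1) 1 :
          MvPolynomial G.E ℝ) else 0) *
       (if (G.restrict (↑γ : Set G.E)).IsSpanningForest T₂
        then (monomial (∑ e ∈ (T₂ᶜ).image Subtype.val, Finsupp.single e 1) 1 :
          MvPolynomial G.E ℝ) else 0)) =
      if ((G.contract (↑γ : Set G.E)).IsSpanningForest T₁ ∧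
          (G.restrict (↑γ : Set G.E)).IsSpanningForest T₂)
      then (monomial (∑ e ∈ ((T₁.image Subtype.val ∪ T₂.image Subtype.val)ᶜ : Finset G.E),
        Finsupp.single e 1) 1 : MvPolynomial G.E ℝ) else 0 := by
    intro T₁ T₂
    rw [ite_zero_mul_ite_zero, monomial_mul, one_mul,
      ← Finset.sum_union (disjoint_compl_image γ T₁ T₂), union_compl_image γ T₁ T₂]
  simp only [hterm]
  rw [← Finset.sum_product']
  rw [← Finset.sum_filter, ← Finset.sum_filter]
  refine Finset.sum_nbij'
    (fun p => p.1.image Subtype.val ∪ p.2.image Subtype.val)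
    (fun T => (Finset.univ.filter (fun e : (G.contract (↑γ : Set G.E)).E => e.1 ∈ T),
               Finset.univ.filter (fun e : (G.restrict (↑γ : Set G.E)).E => e.1 ∈ T)))
    ?_ ?_ ?_ ?_ ?_
  · -- i maps into good trees
    rintro ⟨T₁, T₂⟩ hp
    rw [Finset.mem_filter] at hp
    obtain ⟨-, h1, h2⟩ := hp
    rw [contract_forest_iff] at h1
    rw [restrict_forest_iff] at h2
    obtain ⟨hSF, hint, -⟩ := union_tree (γ := γ)
      (fun e he => image_val_contract_not_mem γ T₁ he)
      (fun e he => image_val_restrict_mem γ T₂ he)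
      h2.1 h2.2 h1.1 h1.2
    rw [Finset.mem_filter]
    refine ⟨Finset.mem_univ _, hSF, ?_⟩
    rw [hint]
    exact h2.2
  · -- j maps into pairs
    intro T hT
    rw [Finset.mem_filter] at hT
    obtain ⟨-, hSF, hgood⟩ := hT
    obtain ⟨k1, k2, k3⟩ := good_tree_split hSF hgood
    rw [Finset.mem_filter]
    refine ⟨Finset.mem_univ _, ?_, ?_⟩
    · rw [contract_forest_iff, image_filter_contract]
      exact ⟨k2, k3⟩
    · rw [restrict_forest_iff, image_filter_restrict]
      exact ⟨k1, hgood⟩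
  · -- left inverse
    rintro ⟨T₁, T₂⟩ hp
    have e1 : Finset.univ.filter (fun e : (G.contract (↑γ : Set G.E)).E =>
        e.1 ∈ T₁.image Subtype.val ∪ T₂.image Subtype.val) = T₁ := by
      ext x
      rw [Finset.mem_filter, Finset.mem_union]
      constructor
      · rintro ⟨-, h | h⟩
        · exact (mem_image_val _ _).1 h
        · exact absurd (image_val_restrict_mem γ T₂ h) (fun hh => x.2 (Finset.mem_coe.2 hh))
      · intro h
        refine ⟨Finset.mem_univ _, Or.inl ?_⟩
        exact (mem_image_val _ _).2 h
    have e2 : Finset.univ.filter (fun e : (G.restrict (↑γ : Set G.E)).E =>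
        e.1 ∈ T₁.image Subtype.val ∪ T₂.image Subtype.val) = T₂ := by
      ext x
      rw [Finset.mem_filter, Finset.mem_union]
      constructor
      · rintro ⟨-, h | h⟩
        · exact absurd (Finset.mem_coe.1 x.2) (image_val_contract_not_mem γ T₁ h)
        · exact (mem_image_val _ _).1 h
      · intro h
        refine ⟨Finset.mem_univ _, Or.inr ?_⟩
        exact (mem_image_val _ _).2 h
    rw [Prod.mk.injEq]
    exact ⟨e1, e2⟩
  · -- right inverse
    intro T hT
    show (Finset.univ.filter (fun e : (G.contract (↑γ : Set G.E)).E => e.1 ∈ T)).image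
        Subtype.val ∪ _ = T
    rw [image_filter_contract, image_filter_restrict]
    ext e
    rw [Finset.mem_union, Finset.mem_sdiff, Finset.mem_inter]
    by_cases he : e ∈ γ <;> by_cases heT : e ∈ T <;> simp [he, heT]
  · -- summand equality
    rintro ⟨T₁, T₂⟩ hp
    rfl

end GoodSum

end FeynGraph

open FeynGraph MvPolynomial in
/-- For a connected graph `G` and a strict subgraph `γ` (a disjoint union of subgraphs,
given by its edge set), the graph polynomial factorizes as
`ψ_G = ψ_{G/γ} ψ_γ + R`, where every monomial of `R` has degree strictly greater than
`h_γ = deg ψ_γ` in the edge variables of `γ`.  Consequently the order of vanishing of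
`ψ_G` along the locus where the edge variables of `γ` vanish equals `h_γ`: every
monomial of `ψ_G` has `γ`-degree at least `h_γ`, with equality for some monomial. -/
theorem psi_contraction_deletion (G : FeynGraph) [Finite G.V] [Finite G.E]
    (hconn : G.IsConnected) (γ : Finset G.E) (hγ : (γ : Set G.E) ≠ Set.univ) :
    ∃ R : MvPolynomial G.E ℝ,
      G.psi =
        (rename Subtype.val (FeynGraph.psi (G.contract ↑γ))) *
          (rename Subtype.val (FeynGraph.psi (G.restrict ↑γ))) + R ∧
      (∀ m ∈ R.support, G.loops ↑γ < ∑ e ∈ γ, m e) ∧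
      (∀ m ∈ G.psi.support, G.loops ↑γ ≤ ∑ e ∈ γ, m e) ∧
      (∃ m ∈ G.psi.support, ∑ e ∈ γ, m e = G.loops ↑γ) := by
  classical
  obtain ⟨e₀, he₀⟩ : ∃ e : G.E, e ∉ (↑γ : Set G.E) := by
    by_contra h
    push_neg at h
    exact hγ (Set.eq_univ_iff_forall.2 h)
  haveI hV : Nonempty G.V := ⟨G.src e₀⟩
  have hloops : G.loops ↑γ = γ.card + G.ncomp ↑γ - Nat.card G.V := by
    unfold loops
    rw [Nat.card_coe_set_eq, Set.ncard_coe_finset]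
  have hlb : Nat.card G.V ≤ γ.card + G.ncomp ↑γ := card_add_ncomp_ge γ
  have hIE : Fintype.ofFinite G.E = fintypeE G := Subsingleton.elim _ _
  have hpsi : G.psi = ∑ T : Finset G.E,
      if G.IsSpanningForest T
      then (monomial (∑ e ∈ Tᶜ, Finsupp.single e 1) 1 : MvPolynomial G.E ℝ) else 0 := by
    rw [psi, hIE]
    refine Finset.sum_congr rfl fun T _ => ?_
    by_cases h : G.IsSpanningForest T
    · rw [if_pos h, if_pos h, prod_X_eq_monomial]
    · rw [if_neg h, if_neg h]
  have hcompl : ∀ T : Finset G.E, (γ ∩ Tᶜ) = γ \ T := by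
    intro T
    ext e
    rw [Finset.mem_inter, Finset.mem_sdiff, Finset.mem_compl]
  have hdeg : ∀ T : Finset G.E,
      ∑ e ∈ γ, (∑ x ∈ Tᶜ, Finsupp.single x 1 : G.E →₀ ℕ) e + (T ∩ γ).card = γ.card := by
    intro T
    rw [sum_indicator_over, hcompl, Finset.inter_comm T γ]
    exact Finset.card_sdiff_add_card_inter γ T
  refine ⟨∑ T : Finset G.E,
      if G.IsSpanningForest T ∧ (T ∩ γ).card + G.ncomp ↑γ ≠ Nat.card G.V
      then (monomial (∑ e ∈ Tᶜ, Finsupp.single e 1) 1 : MvPolynomial G.E ℝ) else 0,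
    ?_, ?_, ?_, ?_⟩
  · -- factorization
    rw [good_sum_eq, hpsi, ← Finset.sum_add_distrib]
    refine Finset.sum_congr rfl fun T _ => ?_
    by_cases h1 : G.IsSpanningForest T
    · by_cases h2 : (T ∩ γ).card + G.ncomp ↑γ = Nat.card G.V
      · rw [if_pos h1, if_pos ⟨h1, h2⟩, if_neg (fun hc => hc.2 h2), add_zero]
      · rw [if_pos h1, if_neg (fun hc => h2 hc.2), if_pos ⟨h1, h2⟩, zero_add]
    · rw [if_neg h1, if_neg (fun hc => h1 hc.1), if_neg (fun hc => h1 hc.1), add_zero]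
  · -- R support bound
    intro m hm
    have hsub := MvPolynomial.support_sum hm
    rw [Finset.mem_biUnion] at hsub
    obtain ⟨T, -, hmT⟩ := hsub
    by_cases hc : G.IsSpanningForest T ∧ (T ∩ γ).card + G.ncomp ↑γ ≠ Nat.card G.V
    · rw [if_pos hc] at hmT
      rw [MvPolynomial.support_monomial, if_neg (one_ne_zero (α := ℝ))] at hmT
      rw [Finset.mem_singleton] at hmT
      subst hmT
      have h1 := inter_card_le (γ := γ) hc.1
      have h2 := hdeg T
      have h3 := hc.2
      omega
    · rw [if_neg hc] at hmT
      simp at hmT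
  · -- psi support lower bound
    intro m hm
    rw [hpsi] at hm
    have hsub := MvPolynomial.support_sum hm
    rw [Finset.mem_biUnion] at hsub
    obtain ⟨T, -, hmT⟩ := hsub
    by_cases hc : G.IsSpanningForest T
    · rw [if_pos hc] at hmT
      rw [MvPolynomial.support_monomial, if_neg (one_ne_zero (α := ℝ))] at hmT
      rw [Finset.mem_singleton] at hmT
      subst hmT
      have h1 := inter_card_le (γ := γ) hc
      have h2 := hdeg T
      omega
    · rw [if_neg hc] at hmT
      simp at hmT
  · -- existence of minimal-degree monomial
    obtain ⟨T₀, hT₀, hgood₀⟩ := exists_good_tree (G := G) γ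
    refine ⟨∑ e ∈ T₀ᶜ, Finsupp.single e 1, ?_, ?_⟩
    · rw [MvPolynomial.mem_support_iff, hpsi, MvPolynomial.coeff_sum]
      rw [Finset.sum_eq_single_of_mem T₀ (Finset.mem_univ _) ?other]
      · rw [apply_ite (MvPolynomial.coeff (∑ e ∈ T₀ᶜ, Finsupp.single e 1)), if_pos hT₀,
          MvPolynomial.coeff_monomial, if_pos rfl]
        exact one_ne_zero
      · intro T _ hne
        rw [apply_ite (MvPolynomial.coeff (∑ e ∈ T₀ᶜ, Finsupp.single e 1)),
          MvPolynomial.coeff_monomial]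
        by_cases hc : G.IsSpanningForest T
        · rw [if_pos hc]
          rw [if_neg ?hd]
          case hd =>
            intro hdd
            apply hne
            have := indicator_sum_injective hdd
            have h2 := congrArg (fun s => sᶜ) this
            simpa using h2
        · rw [if_neg hc]
          exact MvPolynomial.coeff_zero _
    · have h2 := hdeg T₀
      omega
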